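/- Let W ⊆ ℝ^d be a nonempty convex set with diameter at most D (i.e. ‖w − v‖ ≤ D for all w, v ∈ W), let f : ℝ^d → ℝ be convex and differentiable with L₁-Lipschitz gradient (L₁ > 0), and let w* be a global minimizer of f over W. Let (w_k)_{k≥0} be projected gradient descent iterates with step size 1/L₁: w₀ ∈ W and for each k ≥ 1, w_k ∈ W satisfies ⟨w_{k−1} − (1/L₁)∇f(w_{k−1}) − w_k, u − w_k⟩ ≤ 0 for all u ∈ W. Then for every t ≥ 1, f(w_t) − f(w*) ≤ D²L₁/(2t). -/

import Mathlib

open scoped RealInnerProductSpace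

section Aux

variable {d : ℕ} {f : EuclideanSpace ℝ (Fin d) → ℝ}
  {g : EuclideanSpace ℝ (Fin d) → EuclideanSpace ℝ (Fin d)}

lemma pgd_aux_deriv (hg : ∀ x, HasGradientAt f (g x) x)
    (x v : EuclideanSpace ℝ (Fin d)) (t : ℝ) :
    HasDerivAt (fun s : ℝ => f (x + s • v)) ⟪g (x + t • v), v⟫ t := by
  have h1 : HasDerivAt (fun s : ℝ => x + s • v) v t := by
    simpa using ((hasDerivAt_id t).smul_const v).const_add x
  have h2 := (hg (x + t • v)).hasFDerivAt
  simpa [Function.comp_def] using h2.comp_hasDerivAt t h1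

lemma pgd_convex_grad_le (hconv : ConvexOn ℝ Set.univ f)
    (hg : ∀ x, HasGradientAt f (g x) x) (x y : EuclideanSpace ℝ (Fin d)) :
    f x + ⟪g x, y - x⟫ ≤ f y := by
  have hfun : (fun t : ℝ => f (x + t • (y - x)))
      = f ∘ (AffineMap.lineMap x y : ℝ →ᵃ[ℝ] _) := by
    funext t
    simp [AffineMap.lineMap_apply, add_comm]
  have hφ : ConvexOn ℝ Set.univ (fun t : ℝ => f (x + t • (y - x))) := by
    rw [hfun]
    simpa using hconv.comp_affineMap (AffineMap.lineMap x y : ℝ →ᵃ[ℝ] _)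
  have hder : HasDerivAt (fun t : ℝ => f (x + t • (y - x))) ⟪g x, y - x⟫ 0 := by
    have := pgd_aux_deriv hg x (y - x) 0
    simpa using this
  have key := hφ.le_slope_of_hasDerivAt (Set.mem_univ 0) (Set.mem_univ 1) zero_lt_one hder
  rw [slope_def_field] at key
  have e1 : x + (1:ℝ) • (y - x) = y := by rw [one_smul]; abel
  have e0 : x + (0:ℝ) • (y - x) = x := by simp
  rw [e1, e0, sub_zero, div_one] at key
  linarith

lemma pgd_descent {L₁ : ℝ} (hL₁ : 0 < L₁)
    (hg : ∀ x, HasGradientAt f (g x) x)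
    (hlip : ∀ x y, ‖g x - g y‖ ≤ L₁ * ‖x - y‖)
    (x y : EuclideanSpace ℝ (Fin d)) :
    f y ≤ f x + ⟪g x, y - x⟫ + L₁ / 2 * ‖y - x‖ ^ 2 := by
  set v := y - x with hv
  set h : ℝ → ℝ := fun t => f (x + t • v) - t * ⟪g x, v⟫ - L₁ / 2 * t ^ 2 * ‖v‖ ^ 2 with hh
  have hd : ∀ t : ℝ, HasDerivAt h (⟪g (x + t • v), v⟫ - ⟪g x, v⟫ - L₁ * t * ‖v‖ ^ 2) t := by
    intro t
    have h1 := pgd_aux_deriv hg x v t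
    have h2 : HasDerivAt (fun t : ℝ => t * ⟪g x, v⟫) ⟪g x, v⟫ t := by
      simpa using hasDerivAt_mul_const (x := t) (⟪g x, v⟫)
    have h3 : HasDerivAt (fun t : ℝ => L₁ / 2 * t ^ 2 * ‖v‖ ^ 2) (L₁ * t * ‖v‖ ^ 2) t := by
      have := ((hasDerivAt_pow 2 t).const_mul (L₁ / 2)).mul_const (‖v‖ ^ 2)
      rw [show L₁ * t * ‖v‖ ^ 2 = L₁ / 2 * (((2:ℕ):ℝ) * t ^ (2 - 1)) * ‖v‖ ^ 2 by
        rw [show (2:ℕ) - 1 = 1 from rfl]; push_cast; ring]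
      exact this
    exact (h1.sub h2).sub h3
  have hanti : AntitoneOn h (Set.Icc (0 : ℝ) 1) := by
    apply antitoneOn_of_hasDerivWithinAt_nonpos (convex_Icc 0 1)
      (f' := fun t => ⟪g (x + t • v), v⟫ - ⟪g x, v⟫ - L₁ * t * ‖v‖ ^ 2)
    · exact fun t _ => (hd t).continuousAt.continuousWithinAt
    · exact fun t _ => (hd t).hasDerivWithinAt
    · intro t ht
      rw [interior_Icc] at ht
      have hb : ⟪g (x + t • v), v⟫ - ⟪g x, v⟫ ≤ L₁ * t * ‖v‖ ^ 2 := by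
        have h1 : ⟪g (x + t • v), v⟫ - ⟪g x, v⟫ = ⟪g (x + t • v) - g x, v⟫ := by
          rw [inner_sub_left]
        have h2 : ⟪g (x + t • v) - g x, v⟫ ≤ ‖g (x + t • v) - g x‖ * ‖v‖ :=
          real_inner_le_norm _ _
        have h3 : ‖g (x + t • v) - g x‖ ≤ L₁ * (t * ‖v‖) := by
          have := hlip (x + t • v) x
          simpa [norm_smul, abs_of_pos ht.1] using this
        calc ⟪g (x + t • v), v⟫ - ⟪g x, v⟫ = ⟪g (x + t • v) - g x, v⟫ := h1
          _ ≤ ‖g (x + t • v) - g x‖ * ‖v‖ := h2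
          _ ≤ L₁ * (t * ‖v‖) * ‖v‖ := by
              apply mul_le_mul_of_nonneg_right h3 (norm_nonneg _)
          _ = L₁ * t * ‖v‖ ^ 2 := by ring
      linarith
  have key : h 1 ≤ h 0 := hanti (by norm_num) (by norm_num) zero_le_one
  have h0 : h 0 = f x := by simp [hh]
  have h1 : h 1 = f y - ⟪g x, v⟫ - L₁ / 2 * ‖v‖ ^ 2 := by
    simp [hh, hv]
  rw [h0, h1] at key
  linarith

end Aux

/-- Convergence rate of projected gradient descent with step size `1/L₁` for a convex
function with `L₁`-Lipschitz gradient over a convex set of diameter at most `D`. -/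
theorem projected_gradient_descent_rate
    {d : ℕ} (W : Set (EuclideanSpace ℝ (Fin d))) (hW : Convex ℝ W) (hWne : W.Nonempty)
    (D : ℝ) (hdiam : ∀ w ∈ W, ∀ v ∈ W, ‖w - v‖ ≤ D)
    (f : EuclideanSpace ℝ (Fin d) → ℝ)
    (g : EuclideanSpace ℝ (Fin d) → EuclideanSpace ℝ (Fin d))
    (hg : ∀ x, HasGradientAt f (g x) x)
    (hconv : ConvexOn ℝ Set.univ f)
    (L₁ : ℝ) (hL₁ : 0 < L₁)
    (hlip : ∀ x y, ‖g x - g y‖ ≤ L₁ * ‖x - y‖)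
    (wstar : EuclideanSpace ℝ (Fin d)) (hws : wstar ∈ W)
    (hmin : ∀ w ∈ W, f wstar ≤ f w)
    (w : ℕ → EuclideanSpace ℝ (Fin d)) (hw0 : w 0 ∈ W)
    (hmem : ∀ k, w (k + 1) ∈ W)
    (hproj : ∀ k, ∀ u ∈ W,
      ⟪w k - (1 / L₁) • g (w k) - w (k + 1), u - w (k + 1)⟫ ≤ 0) :
    ∀ t : ℕ, 1 ≤ t → f (w t) - f wstar ≤ D ^ 2 * L₁ / (2 * t) := by
  have hmemAll : ∀ k, w k ∈ W := by
    intro k; cases k with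
    | zero => exact hw0
    | succ n => exact hmem n
  set a : ℕ → ℝ := fun k => ‖w k - wstar‖ ^ 2 with ha
  -- projection inequality consequence
  have hprojkey : ∀ k, ∀ u ∈ W,
      ⟪g (w k), w (k + 1) - u⟫ ≤ L₁ * ⟪w k - w (k + 1), w (k + 1) - u⟫ := by
    intro k u hu
    have h := hproj k u hu
    have hexp : ⟪w k - (1 / L₁) • g (w k) - w (k + 1), u - w (k + 1)⟫
        = ⟪w k - w (k + 1), u - w (k + 1)⟫ - (1 / L₁) * ⟪g (w k), u - w (k + 1)⟫ := by
      rw [show w k - (1 / L₁) • g (w k) - w (k + 1)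
          = (w k - w (k + 1)) - (1 / L₁) • g (w k) by abel,
        inner_sub_left, real_inner_smul_left]
    rw [hexp] at h
    have h2 : L₁ * ⟪w k - w (k + 1), u - w (k + 1)⟫ ≤ ⟪g (w k), u - w (k + 1)⟫ := by
      have h' := mul_le_mul_of_nonneg_left (sub_nonpos.mp h) hL₁.le
      rwa [← mul_assoc, mul_one_div, div_self hL₁.ne', one_mul] at h'
    have e1 : ⟪g (w k), w (k + 1) - u⟫ = -⟪g (w k), u - w (k + 1)⟫ := by
      rw [← inner_neg_right]; congr 1; abel
    have e2 : ⟪w k - w (k + 1), w (k + 1) - u⟫ = -⟪w k - w (k + 1), u - w (k + 1)⟫ := by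
      rw [← inner_neg_right]; congr 1; abel
    rw [e1, e2]
    linarith
  -- per-step key inequality
  have hstep : ∀ k, f (w (k + 1)) - f wstar ≤ L₁ / 2 * (a k - a (k + 1)) := by
    intro k
    set p := w k
    set q := w (k + 1)
    have hdesc := pgd_descent hL₁ hg hlip p q
    have hcv := pgd_convex_grad_le hconv hg p wstar
    have hpk := hprojkey k wstar hws
    have hinner : ⟪g p, p - wstar⟫ + ⟪g p, q - p⟫ = ⟪g p, q - wstar⟫ := by
      rw [← inner_add_right]; congr 1; abel
    have hnormid : ‖p - wstar‖ ^ 2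
        = ‖p - q‖ ^ 2 + ‖q - wstar‖ ^ 2 + 2 * ⟪p - q, q - wstar⟫ := by
      have := norm_add_sq_real (p - q) (q - wstar)
      rw [show (p - q) + (q - wstar) = p - wstar by abel] at this
      linarith
    have hcv' : f p - f wstar ≤ ⟪g p, p - wstar⟫ := by
      have : ⟪g p, wstar - p⟫ = -⟪g p, p - wstar⟫ := by
        rw [← inner_neg_right]; congr 1; abel
      have h := pgd_convex_grad_le hconv hg p wstar
      rw [this] at h
      linarith
    have hqp : ‖q - p‖ = ‖p - q‖ := norm_sub_rev _ _
    rw [hqp] at hdesc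
    have : f q - f wstar ≤ ⟪g p, q - wstar⟫ + L₁ / 2 * ‖p - q‖ ^ 2 := by
      have := hdesc
      nlinarith [hcv']
    calc f q - f wstar ≤ ⟪g p, q - wstar⟫ + L₁ / 2 * ‖p - q‖ ^ 2 := this
      _ ≤ L₁ * ⟪p - q, q - wstar⟫ + L₁ / 2 * ‖p - q‖ ^ 2 := by linarith [hpk]
      _ = L₁ / 2 * (a k - a (k + 1)) - L₁ / 2 * ‖p - q‖ ^ 2 + L₁ / 2 * ‖p - q‖ ^ 2 := by
          simp only [ha]
          rw [show (‖w k - wstar‖ : ℝ) ^ 2 = ‖p - wstar‖ ^ 2 from rfl,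
            show (‖w (k+1) - wstar‖ : ℝ) ^ 2 = ‖q - wstar‖ ^ 2 from rfl]
          nlinarith [hnormid]
      _ ≤ L₁ / 2 * (a k - a (k + 1)) := by linarith
  -- descent: f decreases
  have hdec : ∀ k, f (w (k + 1)) ≤ f (w k) := by
    intro k
    set p := w k
    set q := w (k + 1)
    have hdesc := pgd_descent hL₁ hg hlip p q
    have hpk := hprojkey k p (hmemAll k)
    have e : ⟪g p, q - p⟫ ≤ L₁ * ⟪p - q, q - p⟫ := hpk
    have e2 : ⟪p - q, q - p⟫ = -‖p - q‖ ^ 2 := by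
      rw [show q - p = -(p - q) by abel, inner_neg_right, real_inner_self_eq_norm_sq]
    rw [e2] at e
    have hqp : ‖q - p‖ = ‖p - q‖ := norm_sub_rev _ _
    rw [hqp] at hdesc
    nlinarith [norm_nonneg (p - q), hL₁]
  -- telescoping by induction
  have hsum : ∀ t : ℕ, (t : ℝ) * (f (w t) - f wstar) ≤ L₁ / 2 * (a 0 - a t) := by
    intro t
    induction t with
    | zero => simp
    | succ n ih =>
      have h1 := hstep n
      have h2 : f (w (n + 1)) ≤ f (w n) := hdec n
      have h3 : (0 : ℝ) ≤ n := Nat.cast_nonneg n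
      push_cast
      have : (n : ℝ) * (f (w (n + 1)) - f wstar) ≤ (n : ℝ) * (f (w n) - f wstar) := by
        apply mul_le_mul_of_nonneg_left _ h3
        linarith
      nlinarith [ih]
  intro t ht
  have htpos : (0 : ℝ) < t := by exact_mod_cast ht
  have ha0 : a 0 ≤ D ^ 2 := by
    have h := hdiam (w 0) hw0 wstar hws
    have h2 := norm_nonneg (w 0 - wstar)
    have e : a 0 = ‖w 0 - wstar‖ ^ 2 := rfl
    rw [e]
    nlinarith
  have hat : 0 ≤ a t := sq_nonneg _
  have hfinal : (t : ℝ) * (f (w t) - f wstar) ≤ D ^ 2 * L₁ / 2 := by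
    have := hsum t
    nlinarith
  rw [le_div_iff₀ (by positivity : (0:ℝ) < 2 * t)]
  nlinarith [hfinal]
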